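/- If two dynamical systems ((Z,ℱ),f) and ((Y,𝒢),h) on uniform spaces both have the uniform stroboscopical property, then their product ((Z×Y, ℱ×𝒢), f×h), where (f×h)(u,v) = (f(u),h(v)), has the uniform stroboscopical property. -/

import Mathlib

open Filter

/-- The uniform stroboscopical property of a dynamical system `(Z, f)` on a uniform
space: every strictly increasing sequence `A` in `ℕ` has a subsequence `(A (k i))`
for which there is `ϱ : Z → Z` with `f^[A (k i)] ∘ ϱ` converging uniformly to `id`. -/
def UnifStrob {Z : Type*} [UniformSpace Z] (f : Z → Z) : Prop :=
  ∀ A : ℕ → ℕ, StrictMono A → ∃ k : ℕ → ℕ, StrictMono k ∧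
    ∃ ρ : Z → Z, TendstoUniformly (fun i z => f^[A (k i)] (ρ z)) id atTop

/-- the product of two dynamical systems with the uniform
stroboscopical property has the uniform stroboscopical property (with the product
uniform structure). -/
theorem stmt_11 {Z Y : Type*} [UniformSpace Z] [UniformSpace Y] (f : Z → Z) (h : Y → Y)
    (hf : UnifStrob f) (hh : UnifStrob h) :
    UnifStrob (fun p : Z × Y => (f p.1, h p.2)) := by
  intro A hA
  obtain ⟨k1, hk1, ρ1, h1⟩ := hf A hA
  obtain ⟨k2, hk2, ρ2, h2⟩ := hh (A ∘ k1) (hA.comp hk1)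
  refine ⟨k1 ∘ k2, hk1.comp hk2, fun p => (ρ1 p.1, ρ2 p.2), ?_⟩
  have h1' : TendstoUniformly (fun i z => f^[A (k1 (k2 i))] (ρ1 z)) id atTop := by
    intro u hu
    exact hk2.tendsto_atTop.eventually (h1 u hu)
  have key := h1'.prodMap h2
  intro u hu
  filter_upwards [(tendsto_id.prodMk tendsto_id).eventually (key u hu)] with i hi p
  have := hi p
  simpa [show (fun p : Z × Y => (f p.1, h p.2)) = Prod.map f h from rfl, Prod.map_iterate,
    Prod.map] using this
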